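/- arXiv:1309.5624 — 2 statements merged into one kernel-verified Lean document; each statement's English description precedes it below -/
import Mathlib

section
/- The simple Laguerre functions ℓ_n(x) = e^{-x/2} L_n(x) form an orthonormal system in L²(ℝ₊): ∫₀^∞ ℓ_m(x) ℓ_n(x) dx = δ_{mn}. -/
open MeasureTheory Set

/-- The Laguerre polynomial `L_n(x) = ∑_{j=0}^n (-1)^j/j! C(n,j) x^j`. -/
noncomputable def laguerrePoly (n : ℕ) (x : ℝ) : ℝ :=
  ∑ j ∈ Finset.range (n + 1), (-1) ^ j / (Nat.factorial j : ℝ) * (Nat.choose n j : ℝ) * x ^ j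

/-- The simple Laguerre function `ℓ_n(x) = e^{-x/2} L_n(x)`. -/
noncomputable def laguerreFun (n : ℕ) (x : ℝ) : ℝ :=
  Real.exp (-x / 2) * laguerrePoly n x


lemma lemB (m n : ℕ) :
    ∑ k ∈ Finset.range (m + 1), (-1 : ℤ) ^ k * (m.choose k) * (k.choose n) =
      (-1 : ℤ) ^ n * (if m = n then 1 else 0) := by
  rcases lt_or_ge m n with h | h
  · rw [if_neg (by omega), mul_zero]
    apply Finset.sum_eq_zero
    intro k hk
    rw [Finset.mem_range] at hk
    simp [Nat.choose_eq_zero_of_lt (show k < n by omega)]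
  · rw [Finset.range_eq_Ico, ← Finset.sum_Ico_consecutive _ (Nat.zero_le n) (by omega)]
    have h0 : ∑ k ∈ Finset.Ico 0 n, (-1 : ℤ) ^ k * (m.choose k) * (k.choose n) = 0 := by
      apply Finset.sum_eq_zero
      intro k hk
      rw [Finset.mem_Ico] at hk
      simp [Nat.choose_eq_zero_of_lt (show k < n by omega)]
    rw [h0, zero_add, Finset.sum_Ico_eq_sum_range]
    have hsub : m + 1 - n = m - n + 1 := by omega
    rw [hsub]
    have key : ∀ i ∈ Finset.range (m - n + 1),
        (-1 : ℤ) ^ (n + i) * (m.choose (n + i)) * ((n + i).choose n) =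
        ((-1 : ℤ) ^ n * (m.choose n)) * ((-1 : ℤ) ^ i * ((m - n).choose i)) := by
      intro i hi
      rw [Finset.mem_range] at hi
      have h1 : m.choose (n + i) * (n + i).choose n = m.choose n * (m - n).choose (n + i - n) :=
        Nat.choose_mul (by omega)
      have h2 : n + i - n = i := by omega
      rw [h2] at h1
      have h3 : ((m.choose (n + i) : ℤ)) * ((n + i).choose n) = (m.choose n) * ((m - n).choose i) := by
        exact_mod_cast congrArg (Nat.cast : ℕ → ℤ) h1
      rw [pow_add]
      linear_combination ((-1:ℤ)^n * (-1)^i) * h3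
    rw [Finset.sum_congr rfl key, ← Finset.mul_sum, Int.alternating_sum_range_choose]
    by_cases hmn : m = n
    · subst hmn; simp
    · rw [if_neg (by omega), if_neg hmn]
      simp

lemma lemA (n j : ℕ) :
    ∑ k ∈ Finset.range (n + 1), (-1 : ℤ) ^ k * (n.choose k) * ((j + k).choose k) =
      (-1 : ℤ) ^ n * (j.choose n) := by
  have expand : ∀ k ∈ Finset.range (n + 1),
      ((j + k).choose k : ℤ) = ∑ i ∈ Finset.range (n + 1), (j.choose i : ℤ) * (k.choose i) := by
    intro k hk
    rw [Finset.mem_range] at hk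
    have v := Nat.add_choose_eq j k k
    rw [Finset.Nat.sum_antidiagonal_eq_sum_range_succ (fun a b => j.choose a * k.choose b)] at v
    have v2 : (j + k).choose k = ∑ a ∈ Finset.range (k + 1), j.choose a * k.choose a := by
      rw [v]
      apply Finset.sum_congr rfl
      intro a ha
      rw [Finset.mem_range] at ha
      rw [Nat.choose_symm (show a ≤ k by omega)]
    have v3 : ∑ a ∈ Finset.range (n + 1), j.choose a * k.choose a
        = ∑ a ∈ Finset.range (k + 1), j.choose a * k.choose a := by
      symm
      apply Finset.sum_subset
      · intro a ha
        rw [Finset.mem_range] at *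
        omega
      · intro a _ ha
        rw [Finset.mem_range, not_lt] at ha
        exact mul_eq_zero_of_right _ (Nat.choose_eq_zero_of_lt (by omega))
    rw [v2, ← v3]
    push_cast
    ring
  have step : ∀ k ∈ Finset.range (n + 1), (-1 : ℤ) ^ k * (n.choose k) * ((j + k).choose k)
      = ∑ i ∈ Finset.range (n + 1), (j.choose i : ℤ) * ((-1) ^ k * (n.choose k) * (k.choose i)) := by
    intro k hk
    rw [expand k hk, Finset.mul_sum]
    apply Finset.sum_congr rfl
    intro i _
    ring
  rw [Finset.sum_congr rfl step, Finset.sum_comm]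
  have inner : ∀ i ∈ Finset.range (n + 1),
      ∑ k ∈ Finset.range (n + 1), (j.choose i : ℤ) * ((-1) ^ k * (n.choose k) * (k.choose i))
      = (j.choose i : ℤ) * ((-1) ^ i * (if n = i then 1 else 0)) := by
    intro i _
    rw [← Finset.mul_sum, lemB n i]
  rw [Finset.sum_congr rfl inner]
  rw [Finset.sum_eq_single_of_mem n (Finset.self_mem_range_succ n)]
  · simp [mul_comm]
  · intro i _ hne
    rw [if_neg (Ne.symm hne)]
    ring

lemma lemC (m n : ℕ) :
    ∑ j ∈ Finset.range (m + 1), ∑ k ∈ Finset.range (n + 1),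
      (-1 : ℤ) ^ (j + k) * (m.choose j) * (n.choose k) * ((j + k).choose j) =
      (if m = n then 1 else 0) := by
  have inner : ∀ j ∈ Finset.range (m + 1),
      ∑ k ∈ Finset.range (n + 1),
        (-1 : ℤ) ^ (j + k) * (m.choose j) * (n.choose k) * ((j + k).choose j)
      = ((-1 : ℤ) ^ n * ((-1) ^ j * (m.choose j) * (j.choose n))) := by
    intro j _
    have : ∀ k ∈ Finset.range (n + 1),
        (-1 : ℤ) ^ (j + k) * (m.choose j) * (n.choose k) * ((j + k).choose j)
        = ((-1 : ℤ) ^ j * (m.choose j)) * ((-1) ^ k * (n.choose k) * ((j + k).choose k)) := by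
      intro k _
      rw [Nat.choose_symm_add, pow_add]
      ring
    rw [Finset.sum_congr rfl this, ← Finset.mul_sum, lemA n j]
    ring
  rw [Finset.sum_congr rfl inner, ← Finset.mul_sum]
  have : ∑ j ∈ Finset.range (m + 1), (-1 : ℤ) ^ j * (m.choose j) * (j.choose n)
      = (-1 : ℤ) ^ n * (if m = n then 1 else 0) := lemB m n
  rw [this, ← mul_assoc, ← pow_add, ← two_mul, pow_mul]
  norm_num

lemma integrable_exp_mul_pow (p : ℕ) :
    IntegrableOn (fun x : ℝ => Real.exp (-x) * x ^ p) (Set.Ioi 0) := by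
  have h := Real.GammaIntegral_convergent (s := (p : ℝ) + 1) (by positivity)
  apply h.congr_fun ?_ measurableSet_Ioi
  intro x hx
  simp only [add_sub_cancel_right, Real.rpow_natCast]

lemma integral_exp_mul_pow (p : ℕ) :
    ∫ x in Set.Ioi (0:ℝ), Real.exp (-x) * x ^ p = (p.factorial : ℝ) := by
  rw [← Real.Gamma_nat_eq_factorial p,
    Real.Gamma_eq_integral (show (0:ℝ) < (p : ℝ) + 1 by positivity)]
  apply setIntegral_congr_fun measurableSet_Ioi
  intro x hx
  simp only [add_sub_cancel_right, Real.rpow_natCast]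

/-- The simple Laguerre functions form an orthonormal system in `L²(ℝ₊)`. -/
theorem laguerre_orthonormal (m n : ℕ) :
    ∫ x in Ioi (0 : ℝ), laguerreFun m x * laguerreFun n x =
      if m = n then 1 else 0 := by
  set c : ℕ × ℕ → ℝ := fun p =>
    ((-1) ^ p.1 / (Nat.factorial p.1 : ℝ) * (Nat.choose m p.1)) *
    ((-1) ^ p.2 / (Nat.factorial p.2 : ℝ) * (Nat.choose n p.2)) with hc
  have key : EqOn (fun x => laguerreFun m x * laguerreFun n x)
      (fun x => ∑ p ∈ Finset.range (m + 1) ×ˢ Finset.range (n + 1),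
        c p * (Real.exp (-x) * x ^ (p.1 + p.2))) (Ioi 0) := by
    intro x _
    simp only [laguerreFun, laguerrePoly]
    rw [Finset.sum_product]
    have hex : Real.exp (-x / 2) * Real.exp (-x / 2) = Real.exp (-x) := by
      rw [← Real.exp_add]; ring_nf
    rw [show (Real.exp (-x / 2) * ∑ j ∈ Finset.range (m + 1),
          (-1) ^ j / (Nat.factorial j : ℝ) * (Nat.choose m j) * x ^ j) *
        (Real.exp (-x / 2) * ∑ k ∈ Finset.range (n + 1),
          (-1) ^ k / (Nat.factorial k : ℝ) * (Nat.choose n k) * x ^ k)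
      = (Real.exp (-x / 2) * Real.exp (-x / 2)) *
        ((∑ j ∈ Finset.range (m + 1),
          (-1) ^ j / (Nat.factorial j : ℝ) * (Nat.choose m j) * x ^ j) *
        (∑ k ∈ Finset.range (n + 1),
          (-1) ^ k / (Nat.factorial k : ℝ) * (Nat.choose n k) * x ^ k)) from by ring,
      hex, Finset.sum_mul_sum, Finset.mul_sum]
    apply Finset.sum_congr rfl
    intro j _
    rw [Finset.mul_sum]
    apply Finset.sum_congr rfl
    intro k _
    simp only [hc, pow_add]
    ring
  rw [setIntegral_congr_fun measurableSet_Ioi key,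
    integral_finset_sum _ (fun p _ => ((integrable_exp_mul_pow (p.1 + p.2)).const_mul (c p)))]
  simp_rw [MeasureTheory.integral_const_mul, integral_exp_mul_pow]
  rw [Finset.sum_product]
  have cast_eq : ∀ j ∈ Finset.range (m + 1), ∀ k ∈ Finset.range (n + 1),
      c (j, k) * ((j + k).factorial : ℝ)
      = (((-1 : ℤ) ^ (j + k) * (m.choose j) * (n.choose k) * ((j + k).choose j) : ℤ) : ℝ) := by
    intro j _ k _
    have hnat : ((j + k).choose j) * j.factorial * k.factorial = (j + k).factorial := by
      have := Nat.add_choose_mul_factorial_mul_factorial k j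
      rw [add_comm k j] at this
      linarith [this]
    have hreal : (((j + k).factorial : ℝ)) =
        ((j + k).choose j : ℝ) * (j.factorial : ℝ) * (k.factorial : ℝ) := by
      exact_mod_cast hnat.symm
    simp only [hc, hreal]
    push_cast
    field_simp
    ring
  calc ∑ j ∈ Finset.range (m + 1), ∑ k ∈ Finset.range (n + 1),
        c (j, k) * ((j + k).factorial : ℝ)
      = ((∑ j ∈ Finset.range (m + 1), ∑ k ∈ Finset.range (n + 1),
          (-1 : ℤ) ^ (j + k) * (m.choose j) * (n.choose k) * ((j + k).choose j) : ℤ) : ℝ) := by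
        push_cast
        refine Finset.sum_congr rfl fun j hj => Finset.sum_congr rfl fun k hk => ?_
        have := cast_eq j hj k hk
        push_cast at this
        exact this
    _ = if m = n then 1 else 0 := by
        rw [lemC m n]
        split <;> norm_num
end

section
/- Let a : ℝ₊ → ℝ be nonnegative a.e. and in L₁(ℝ₊,0) (i.e., a(u)e^{−εu} ∈ L₁(ℝ₊) for every ε > 0). If γ_{a,0} is bounded on ℝ₊, then γ_{a,k} is bounded on ℝ₊ for every k ∈ ℤ₊. -/
open MeasureTheory Set Filter Topology

lemma laguerrePoly_abs_le (k : ℕ) (x : ℝ) (hx : 0 ≤ x) :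
    |laguerrePoly k x| ≤ 2 ^ k * (1 + x) ^ k := by
  have h1x : (1:ℝ) ≤ 1 + x := by linarith
  calc |laguerrePoly k x|
      ≤ ∑ j ∈ Finset.range (k + 1),
          |(-1:ℝ) ^ j / (Nat.factorial j : ℝ) * (Nat.choose k j : ℝ) * x ^ j| :=
        Finset.abs_sum_le_sum_abs _ _
    _ ≤ ∑ j ∈ Finset.range (k + 1), (Nat.choose k j : ℝ) * (1 + x) ^ k := by
        apply Finset.sum_le_sum
        intro j hj
        rw [abs_mul, abs_mul, abs_div, abs_pow, abs_neg, abs_one, one_pow,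
          abs_pow, abs_of_nonneg hx, Nat.abs_cast, Nat.abs_cast]
        have h1 : (1:ℝ) / (Nat.factorial j : ℝ) ≤ 1 := by
          rw [div_le_one (by positivity)]
          exact_mod_cast Nat.one_le_iff_ne_zero.mpr (Nat.factorial_ne_zero j)
        have h2 : x ^ j ≤ (1 + x) ^ k := by
          calc x ^ j ≤ (1 + x) ^ j := pow_le_pow_left₀ hx (by linarith) j
            _ ≤ (1 + x) ^ k := pow_le_pow_right₀ h1x (Nat.lt_succ_iff.mp (Finset.mem_range.mp hj))
        calc 1 / (Nat.factorial j : ℝ) * (Nat.choose k j : ℝ) * x ^ j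
            ≤ 1 * (Nat.choose k j : ℝ) * (1 + x) ^ k := by
              apply mul_le_mul _ h2 (by positivity) (by positivity)
              exact mul_le_mul_of_nonneg_right h1 (by positivity)
          _ = (Nat.choose k j : ℝ) * (1 + x) ^ k := by ring
    _ = 2 ^ k * (1 + x) ^ k := by
        rw [← Finset.sum_mul]
        congr 1
        rw [← Nat.cast_sum, Nat.sum_range_choose]
        push_cast; ring

lemma laguerreFun_sq_le (k : ℕ) : ∃ M : ℝ, 0 ≤ M ∧ ∀ x : ℝ, 0 ≤ x →
    (laguerreFun k x) ^ 2 ≤ M * Real.exp (-x / 2) := by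
  refine ⟨4 ^ k * 4 ^ k * (2 * k).factorial * Real.exp (1 / 2), by positivity, ?_⟩
  intro x hx
  have key : (1 + x) ^ (2 * k) ≤ (2 * k).factorial * Real.exp ((1 + x) / 2) * 2 ^ (2 * k) := by
    have h := Real.pow_div_factorial_le_exp (x := (1 + x) / 2) (by positivity) (2 * k)
    rw [div_le_iff₀ (by positivity)] at h
    calc (1 + x) ^ (2 * k) = ((1 + x) / 2) ^ (2 * k) * 2 ^ (2 * k) := by
          rw [div_pow, div_mul_cancel₀]; positivity
      _ ≤ (2 * k).factorial * Real.exp ((1 + x) / 2) * 2 ^ (2 * k) := by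
          apply mul_le_mul_of_nonneg_right _ (by positivity)
          linarith [h]
  have hL : (laguerrePoly k x) ^ 2 ≤ 4 ^ k * (1 + x) ^ (2 * k) := by
    have h := laguerrePoly_abs_le k x hx
    calc (laguerrePoly k x) ^ 2 = |laguerrePoly k x| ^ 2 := (sq_abs _).symm
      _ ≤ (2 ^ k * (1 + x) ^ k) ^ 2 := pow_le_pow_left₀ (abs_nonneg _) h 2
      _ = 4 ^ k * (1 + x) ^ (2 * k) := by
          have h4 : ((2:ℝ) ^ k) ^ 2 = 4 ^ k := by
            rw [← pow_mul, mul_comm, pow_mul]; norm_num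
          rw [mul_pow, h4, ← pow_mul, mul_comm k 2]
  have hexp : Real.exp (-x / 2) ^ 2 = Real.exp (-x) := by
    rw [sq, ← Real.exp_add]; ring_nf
  have hE : Real.exp (-x) * Real.exp ((1 + x) / 2) = Real.exp (1 / 2) * Real.exp (-x / 2) := by
    rw [← Real.exp_add, ← Real.exp_add]; ring_nf
  have h2k : ((2:ℝ)) ^ (2 * k) = 4 ^ k := by rw [pow_mul]; norm_num
  unfold laguerreFun
  rw [mul_pow, hexp]
  calc Real.exp (-x) * (laguerrePoly k x) ^ 2
      ≤ Real.exp (-x) * (4 ^ k * ((2 * k).factorial * Real.exp ((1 + x) / 2) * 2 ^ (2 * k))) := by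
        apply mul_le_mul_of_nonneg_left _ (Real.exp_pos _).le
        calc (laguerrePoly k x) ^ 2 ≤ 4 ^ k * (1 + x) ^ (2 * k) := hL
          _ ≤ 4 ^ k * ((2 * k).factorial * Real.exp ((1 + x) / 2) * 2 ^ (2 * k)) :=
              mul_le_mul_of_nonneg_left key (by positivity)
    _ = 4 ^ k * 4 ^ k * (2 * k).factorial * Real.exp (1 / 2) * Real.exp (-x / 2) := by
        rw [h2k]
        linear_combination (4 ^ k * 4 ^ k * ((2 * k).factorial : ℝ)) * hE

lemma laguerreFun_zero (x : ℝ) : laguerreFun 0 x = Real.exp (-x / 2) := by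
  simp [laguerreFun, laguerrePoly]

/-- If `a ≥ 0` a.e. belongs to `L₁(ℝ₊,0)` and `γ_{a,0}` is bounded on `ℝ₊`, then
`γ_{a,k}` is bounded on `ℝ₊` for every `k`, where
`γ_{a,k}(ξ) = 2ξ ∫₀^∞ a(u) ℓ_k(2uξ)² du`. -/
theorem gamma_bounded_all_k_of_bounded_k0 (a : ℝ → ℝ) (hmeas : Measurable a)
    (hpos : ∀ᵐ u ∂(volume.restrict (Ioi (0 : ℝ))), 0 ≤ a u)
    (hL1 : ∀ ε : ℝ, 0 < ε →
      (∫⁻ u in Ioi (0 : ℝ), ENNReal.ofReal (a u * Real.exp (-ε * u))) < ⊤)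
    (hbdd : ∃ C : ENNReal, C ≠ ⊤ ∧ ∀ ξ : ℝ, 0 < ξ →
      ENNReal.ofReal (2 * ξ) *
        ∫⁻ u in Ioi (0 : ℝ), ENNReal.ofReal (a u * (laguerreFun 0 (2 * u * ξ)) ^ 2) ≤ C) :
    ∀ k : ℕ, ∃ C : ENNReal, C ≠ ⊤ ∧ ∀ ξ : ℝ, 0 < ξ →
      ENNReal.ofReal (2 * ξ) *
        ∫⁻ u in Ioi (0 : ℝ), ENNReal.ofReal (a u * (laguerreFun k (2 * u * ξ)) ^ 2) ≤ C := by
  intro k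
  obtain ⟨M, hM, hMle⟩ := laguerreFun_sq_le k
  obtain ⟨C, hC, hCle⟩ := hbdd
  refine ⟨ENNReal.ofReal M * (ENNReal.ofReal 2 * C), by
    exact ENNReal.mul_ne_top ENNReal.ofReal_ne_top
      (ENNReal.mul_ne_top ENNReal.ofReal_ne_top hC), ?_⟩
  intro ξ hξ
  have hξ2 : 0 < ξ / 2 := by linarith
  have hae : ∀ᵐ u ∂(volume.restrict (Ioi (0 : ℝ))),
      ENNReal.ofReal (a u * (laguerreFun k (2 * u * ξ)) ^ 2) ≤
        ENNReal.ofReal M * ENNReal.ofReal (a u * (laguerreFun 0 (2 * u * (ξ / 2))) ^ 2) := by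
    filter_upwards [hpos, ae_restrict_mem measurableSet_Ioi] with u hu hmem
    have hu0 : 0 < u := hmem
    have hx : (0:ℝ) ≤ 2 * u * ξ := by positivity
    have hsq : (laguerreFun 0 (2 * u * (ξ / 2))) ^ 2 = Real.exp (-(2 * u * ξ) / 2) := by
      rw [laguerreFun_zero, sq, ← Real.exp_add]
      congr 1; ring
    rw [← ENNReal.ofReal_mul hM]
    apply ENNReal.ofReal_le_ofReal
    have hb := hMle (2 * u * ξ) hx
    calc a u * (laguerreFun k (2 * u * ξ)) ^ 2
        ≤ a u * (M * Real.exp (-(2 * u * ξ) / 2)) := mul_le_mul_of_nonneg_left hb hu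
      _ = M * (a u * (laguerreFun 0 (2 * u * (ξ / 2))) ^ 2) := by rw [hsq]; ring
  have h2ξ : ENNReal.ofReal (2 * ξ) = ENNReal.ofReal 2 * ENNReal.ofReal (2 * (ξ / 2)) := by
    rw [← ENNReal.ofReal_mul (by norm_num)]
    congr 1; ring
  calc ENNReal.ofReal (2 * ξ) *
        ∫⁻ u in Ioi (0 : ℝ), ENNReal.ofReal (a u * (laguerreFun k (2 * u * ξ)) ^ 2)
      ≤ ENNReal.ofReal (2 * ξ) *
        ∫⁻ u in Ioi (0 : ℝ), ENNReal.ofReal M *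
          ENNReal.ofReal (a u * (laguerreFun 0 (2 * u * (ξ / 2))) ^ 2) :=
        mul_le_mul_right (lintegral_mono_ae hae) _
    _ = ENNReal.ofReal M * (ENNReal.ofReal 2 * (ENNReal.ofReal (2 * (ξ / 2)) *
        ∫⁻ u in Ioi (0 : ℝ), ENNReal.ofReal (a u * (laguerreFun 0 (2 * u * (ξ / 2))) ^ 2))) := by
        rw [lintegral_const_mul' _ _ ENNReal.ofReal_ne_top, h2ξ]
        ring
    _ ≤ ENNReal.ofReal M * (ENNReal.ofReal 2 * C) := by
        exact mul_le_mul_right (mul_le_mul_right (hCle (ξ / 2) hξ2) _) _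
end
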